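/- arXiv:1904.10574 — 4 statements merged into one kernel-verified Lean document; each statement's English description precedes it below -/
import Mathlib

section
/- Let w take values in [0,1] on ordered pairs of distinct vertices from {1,...,m} with w(j,k) + w(k,j) = 1 for all distinct j,k, and w(i,j) + w(j,k) + w(k,i) ≤ 2 for all distinct i,j,k. Then for every pair of distinct vertices j,k: m·w(j,k) − (m−1) ≤ Σ_{i≠k} w(i,k) − Σ_{i≠j} w(i,j). -/
theorem stmt_12 (m : ℕ) (w : Fin m → Fin m → ℝ)
    (h0 : ∀ j k : Fin m, j ≠ k → 0 ≤ w j k)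
    (h1 : ∀ j k : Fin m, j ≠ k → w j k ≤ 1)
    (hsum : ∀ j k : Fin m, j ≠ k → w j k + w k j = 1)
    (htri : ∀ i j k : Fin m, i ≠ j → j ≠ k → i ≠ k → w i j + w j k + w k i ≤ 2) :
    ∀ j k : Fin m, j ≠ k →
      (m : ℝ) * w j k - ((m : ℝ) - 1) ≤
        (∑ i ∈ Finset.univ.erase k, w i k) - (∑ i ∈ Finset.univ.erase j, w i j) := by
  intro j k hjk
  classical
  set S : Finset (Fin m) := (Finset.univ.erase k).erase j with hS
  have hjk' : j ∈ Finset.univ.erase k := Finset.mem_erase.2 ⟨hjk, Finset.mem_univ j⟩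
  have hkj' : k ∈ Finset.univ.erase j := Finset.mem_erase.2 ⟨hjk.symm, Finset.mem_univ k⟩
  have e1 : (∑ i ∈ Finset.univ.erase k, w i k) = w j k + ∑ i ∈ S, w i k :=
    (Finset.add_sum_erase _ _ hjk').symm
  have e2 : (∑ i ∈ Finset.univ.erase j, w i j) = w k j + ∑ i ∈ (Finset.univ.erase j).erase k, w i j :=
    (Finset.add_sum_erase _ _ hkj').symm
  have ecomm : (Finset.univ.erase j).erase k = S := Finset.erase_right_comm
  rw [e1, e2, ecomm]
  have hm : 2 ≤ m := by
    by_contra h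
    push_neg at h
    interval_cases m
    · exact j.elim0
    · exact hjk (Subsingleton.elim j k)
  have hcard : S.card = m - 2 := by
    rw [hS, Finset.card_erase_of_mem hjk', Finset.card_erase_of_mem (Finset.mem_univ k)]
    simp only [Finset.card_univ, Fintype.card_fin]
    omega
  have key : ∀ i ∈ S, w j k - 1 ≤ w i k - w i j := by
    intro i hi
    have hij : i ≠ j := (Finset.mem_erase.1 hi).1
    have hik : i ≠ k := (Finset.mem_erase.1 ((Finset.mem_erase.1 hi).2)).1
    have htr := htri i j k hij hjk hik
    have hik' := hsum i k hik
    linarith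
  have hsumS : (S.card : ℝ) * (w j k - 1) ≤ ∑ i ∈ S, (w i k - w i j) := by
    have := Finset.card_nsmul_le_sum S _ _ key
    simpa [nsmul_eq_mul] using this
  have hkj := hsum j k hjk
  have hcard' : (S.card : ℝ) = (m : ℝ) - 2 := by
    rw [hcard]
    push_cast [Nat.cast_sub hm]
    ring
  rw [hcard'] at hsumS
  have hsplit : ∑ i ∈ S, (w i k - w i j) = (∑ i ∈ S, w i k) - ∑ i ∈ S, w i j :=
    Finset.sum_sub_distrib _ _
  linarith
end

section
/- Let w take values in [0,1] on ordered pairs of distinct vertices with w(j,k)+w(k,j)=1 for all distinct j,k and w(i,j)+w(j,k)+w(k,i) ≤ 2 for all distinct i,j,k (triangle inequalities). Then for every directed cycle v_1, v_2, ..., v_p, v_1 of distinct vertices, Σ w(v_i, v_{i+1}) + w(v_p, v_1) ≤ p − 1. -/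
theorem stmt_13 {V : Type*} (w : V → V → ℝ)
    (h0 : ∀ j k : V, j ≠ k → 0 ≤ w j k)
    (h1 : ∀ j k : V, j ≠ k → w j k ≤ 1)
    (hsum : ∀ j k : V, j ≠ k → w j k + w k j = 1)
    (htri : ∀ i j k : V, i ≠ j → j ≠ k → i ≠ k → w i j + w j k + w k i ≤ 2) :
    ∀ p : ℕ, ∀ hp : 3 ≤ p, ∀ v : Fin p → V, Function.Injective v →
      (∑ i : Fin p, w (v i) (v ⟨(i.1 + 1) % p, Nat.mod_lt _ (by omega)⟩)) ≤ (p : ℝ) - 1 := by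
  intro p hp
  induction p, hp using Nat.le_induction with
  | base =>
    intro v hv
    rw [Fin.sum_univ_three]
    have h01 : v 0 ≠ v 1 := hv.ne (by decide)
    have h12 : v 1 ≠ v 2 := hv.ne (by decide)
    have h02 : v 0 ≠ v 2 := hv.ne (by decide)
    have := htri (v 0) (v 1) (v 2) h01 h12 h02
    norm_num
    convert this using 2 <;> congr 1
  | succ p hp IH =>
    intro v hv
    set v' : Fin p → V := fun i => v i.castSucc with hv'def
    have hv' : Function.Injective v' :=
      Function.Injective.comp hv (Fin.castSucc_injective p)
    have hIH := IH v' hv'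
    set L : Fin p := ⟨p - 1, by omega⟩ with hL
    -- abbreviations
    set f : Fin (p+1) → ℝ := fun i =>
      w (v i) (v ⟨(i.1 + 1) % (p+1), Nat.mod_lt _ (by omega)⟩) with hf
    set g : Fin p → ℝ := fun i =>
      w (v' i) (v' ⟨(i.1 + 1) % p, Nat.mod_lt _ (by omega)⟩) with hg
    have hsplitf : ∑ i ∈ Finset.univ.erase L, f i.castSucc + f L.castSucc
        = ∑ i : Fin p, f i.castSucc :=
      Finset.sum_erase_add _ _ (Finset.mem_univ L)
    have hsplitg : ∑ i ∈ Finset.univ.erase L, g i + g L = ∑ i : Fin p, g i :=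
      Finset.sum_erase_add _ _ (Finset.mem_univ L)
    have hcong : ∑ i ∈ Finset.univ.erase L, f i.castSucc
        = ∑ i ∈ Finset.univ.erase L, g i := by
      refine Finset.sum_congr rfl ?_
      intro i hi
      have hne : i ≠ L := (Finset.mem_erase.mp hi).1
      have hlt : i.1 + 1 < p := by
        have : i.1 ≠ p - 1 := fun h => hne (Fin.ext h)
        omega
      simp only [hf, hg, hv'def]
      congr 2
      · exact Fin.ext (by simp [Nat.mod_eq_of_lt, hlt, Nat.mod_eq_of_lt (by omega : i.1+1 < p+1)])
    have hfL : f L.castSucc = w (v ⟨p-1, by omega⟩) (v ⟨p, by omega⟩) := by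
      simp only [hf]
      congr 2
      exact Fin.ext (by show (p-1+1) % (p+1) = p
                        rw [(by omega : p-1+1 = p)]; exact Nat.mod_eq_of_lt (by omega))
    have hgL : g L = w (v ⟨p-1, by omega⟩) (v ⟨0, by omega⟩) := by
      simp only [hg, hv'def]
      congr 2
      exact Fin.ext (by show (p-1+1) % p = 0
                        rw [(by omega : p-1+1 = p)]; exact Nat.mod_self p)
    have hflast : f (Fin.last p) = w (v ⟨p, by omega⟩) (v ⟨0, by omega⟩) := by
      simp only [hf]
      congr 2
      exact Fin.ext (Nat.mod_self (p+1))
    -- distinctness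
    have d1 : v ⟨p-1, by omega⟩ ≠ v ⟨p, by omega⟩ := hv.ne (by simp [Fin.ext_iff]; omega)
    have d2 : v ⟨p, by omega⟩ ≠ v ⟨0, by omega⟩ := hv.ne (by simp [Fin.ext_iff]; omega)
    have d3 : v ⟨p-1, by omega⟩ ≠ v ⟨0, by omega⟩ := hv.ne (by simp [Fin.ext_iff]; omega)
    have htr := htri _ _ _ d1 d2 d3
    have hsm := hsum _ _ d3
    have hgoal : (∑ i : Fin (p+1), f i) ≤ ((p:ℝ)+1) - 1 := by
      rw [Fin.sum_univ_castSucc]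
      have h2 : ∑ i ∈ Finset.univ.erase L, g i + g L ≤ (p:ℝ) - 1 := by
        rw [hsplitg]; exact hIH
      rw [hgL] at h2
      rw [← hsplitf, hcong, hfL, hflast]
      linarith
    show (∑ i : Fin (p+1), f i) ≤ ((p+1:ℕ):ℝ) - 1
    push_cast
    exact hgoal
end

section
/- Let G be a directed graph on m vertices that admits a topological ordering given by a permutation matrix o (o(r,s)=1 iff vertex r has order s) satisfying, for every arc (j,k): 1 − m·[arc (k,j) present] ≤ Σ_s s·(o(k,s) − o(j,s)). If additionally at most one of each pair of opposite arcs is present, then the relation z(i,j)=1 (arc present) is transitive on the underlying bidirectional edge set: z(i,j)=1 and z(j,k)=1 imply z(i,k)=1 whenever the pair (i,k) is an edge of the super-structure. -/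
open Classical in
theorem stmt_15 (m : ℕ) (A E : Fin m → Fin m → Prop)
    (hE_symm : ∀ j k, E j k → E k j) (hE_irr : ∀ v, ¬ E v v)
    (hAE : ∀ j k, A j k → E j k)
    (hasym : ∀ j k, ¬ (A j k ∧ A k j))
    (o : Fin m → Fin m → ℝ)
    (h01 : ∀ r s, o r s = 0 ∨ o r s = 1)
    (hrow : ∀ r, ∑ s, o r s = 1)
    (hcol : ∀ s, ∑ r, o r s = 1)
    (hcon : ∀ j k, E j k →
      (if A j k then (1 : ℝ) else 0) - (m : ℝ) * (if A k j then (1 : ℝ) else 0) ≤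
        ∑ s : Fin m, ((s : ℕ) + 1 : ℝ) * (o k s - o j s)) :
    ∀ i j k, E i k → A i j → A j k → A i k := by
  intro i j k hEik hAij hAjk
  by_contra hAik
  have key : ∀ a b : Fin m, (∑ s : Fin m, ((s : ℕ) + 1 : ℝ) * (o b s - o a s)) =
      (∑ s : Fin m, ((s : ℕ) + 1 : ℝ) * o b s) - ∑ s : Fin m, ((s : ℕ) + 1 : ℝ) * o a s := by
    intro a b
    rw [← Finset.sum_sub_distrib]
    exact Finset.sum_congr rfl fun s _ => by ring
  have h1 := hcon i j (hAE _ _ hAij)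
  have h2 := hcon j k (hAE _ _ hAjk)
  have h3 := hcon k i (hE_symm _ _ hEik)
  rw [if_pos hAij, if_neg (fun h => hasym i j ⟨hAij, h⟩), key] at h1
  rw [if_pos hAjk, if_neg (fun h => hasym j k ⟨hAjk, h⟩), key] at h2
  rw [if_neg hAik, key] at h3
  have hge : (0 : ℝ) ≤ (if A k i then (1 : ℝ) else 0) := by split <;> norm_num
  linarith
end

section
/- Any feasible 0-1 solution (z, ψ) of the layered network constraints (z(j,k)+z(k,j)=1 on each super-structure edge; z(j,k) − (m−1)z(k,j) ≤ ψ(k) − ψ(j); 1 ≤ ψ ≤ m) can be mapped to a feasible solution of the topological ordering constraints by ranking the vertices according to ψ (breaking ties arbitrarily) and setting o(j, rank of j) = 1; the resulting (z, o) satisfies z(j,k) − m·z(k,j) ≤ Σ_s s·(o(k,s) − o(j,s)) for every super-structure arc (j,k). -/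
theorem stmt_16 (m : ℕ) (E : Fin m → Fin m → Prop)
    (hE_symm : ∀ j k, E j k → E k j)
    (z : Fin m → Fin m → ℝ) (ψ : Fin m → ℝ)
    (h01 : ∀ j k, z j k = 0 ∨ z j k = 1)
    (hsum : ∀ j k, E j k → z j k + z k j = 1)
    (hLN : ∀ j k, E j k → z j k - ((m : ℝ) - 1) * z k j ≤ ψ k - ψ j)
    (hψ : ∀ v, 1 ≤ ψ v ∧ ψ v ≤ (m : ℝ)) :
    ∃ o : Fin m → Fin m → ℝ,
      (∀ r s, o r s = 0 ∨ o r s = 1) ∧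
      (∀ r, ∑ s, o r s = 1) ∧
      (∀ s, ∑ r, o r s = 1) ∧
      (∀ j k : Fin m, ψ j < ψ k →
        ∑ s : Fin m, ((s : ℕ) + 1 : ℝ) * o j s < ∑ s : Fin m, ((s : ℕ) + 1 : ℝ) * o k s) ∧
      (∀ j k, E j k →
        z j k - (m : ℝ) * z k j ≤ ∑ s : Fin m, ((s : ℕ) + 1 : ℝ) * (o k s - o j s)) := by
  set σ : Equiv.Perm (Fin m) := (Tuple.sort ψ)⁻¹ with hσ
  have hmono : ∀ j k : Fin m, ψ j < ψ k → σ j < σ k := by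
    intro j k h
    by_contra hle
    push_neg at hle
    have := Tuple.monotone_sort ψ hle
    simp only [Function.comp] at this
    have hjk : ψ j = ψ ((Tuple.sort ψ) (σ j)) := by simp [hσ]
    have hkk : ψ k = ψ ((Tuple.sort ψ) (σ k)) := by simp [hσ]
    rw [hjk, hkk] at h
    exact absurd this (not_le.mpr h)
  have key : ∀ j : Fin m, ∑ s : Fin m, ((s : ℕ) + 1 : ℝ) * (if s = σ j then 1 else 0)
      = ((σ j : ℕ) : ℝ) + 1 := by
    intro j
    rw [Finset.sum_eq_single (σ j)] <;> simp +contextual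
  refine ⟨fun r s => if s = σ r then 1 else 0, ?_, ?_, ?_, ?_, ?_⟩
  · intro r s; dsimp only; split <;> simp
  · intro r; simp
  · intro s
    dsimp only
    rw [Finset.sum_congr rfl (fun r _ => by
      rw [show ((if s = σ r then (1:ℝ) else 0)) = if r = σ.symm s then 1 else 0 by
        congr 1; simp [eq_comm, Equiv.eq_symm_apply]])]
    simp
  · intro j k h
    dsimp only
    rw [key, key]
    have := hmono j k h
    have : (σ j : ℕ) < (σ k : ℕ) := this
    have : ((σ j : ℕ) : ℝ) < ((σ k : ℕ) : ℝ) := by exact_mod_cast this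
    linarith
  · intro j k hjk
    dsimp only
    have hsimp : ∑ s : Fin m, ((s : ℕ) + 1 : ℝ) *
        ((if s = σ k then (1:ℝ) else 0) - (if s = σ j then 1 else 0))
        = ((σ k : ℕ) : ℝ) - ((σ j : ℕ) : ℝ) := by
      have h1 := key j; have h2 := key k
      have hsplit : ∀ s : Fin m, ((s:ℕ)+1:ℝ) *
          ((if s = σ k then (1:ℝ) else 0) - (if s = σ j then 1 else 0))
          = ((s:ℕ)+1:ℝ) * (if s = σ k then (1:ℝ) else 0)
            - ((s:ℕ)+1:ℝ) * (if s = σ j then 1 else 0) := fun s => by ring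
      rw [Finset.sum_congr rfl fun s _ => hsplit s, Finset.sum_sub_distrib, h1, h2]; ring
    rw [hsimp]
    have hb1 : (σ j : ℕ) < m := (σ j).isLt
    have hb2 : (σ k : ℕ) < m := (σ k).isLt
    have hb1' : ((σ j : ℕ) : ℝ) ≤ (m : ℝ) - 1 := by
      have : (σ j : ℕ) + 1 ≤ m := hb1
      have : ((σ j : ℕ) : ℝ) + 1 ≤ (m : ℝ) := by exact_mod_cast this
      linarith
    have hb2' : (0:ℝ) ≤ ((σ k : ℕ) : ℝ) := by positivity
    rcases h01 j k with h0 | h1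
    · have hz : z k j = 1 := by have := hsum j k hjk; linarith
      rw [h0, hz]
      have hm1 : (1:ℝ) ≤ (m : ℝ) := by
        have := (hψ j).1; have := (hψ j).2; linarith
      linarith
    · have hz : z k j = 0 := by have := hsum j k hjk; linarith
      have hle := hLN j k hjk
      rw [h1, hz] at *
      have hψlt : ψ j < ψ k := by
        simp only [mul_zero, sub_zero] at hle; linarith
      have := hmono j k hψlt
      have hnat : (σ j : ℕ) + 1 ≤ (σ k : ℕ) := this
      have : ((σ j : ℕ) : ℝ) + 1 ≤ ((σ k : ℕ) : ℝ) := by exact_mod_cast hnat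
      linarith
end
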